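/- Let R be a left and right noetherian ring and let f: M → N be a morphism of finitely generated Gorenstein projective right R-modules. If Ext^1(X,f): Ext^1_R(X,M) → Ext^1_R(X,N) is zero for every finitely generated Gorenstein projective right R-module X, then f factors through a finitely generated projective right R-module; that is, given a short exact sequence 0 → M → Q → Ω⁻¹M → 0 with Q projective and Ω⁻¹M finitely generated Gorenstein projective, f factors through Q. -/

import Mathlib

open CategoryTheory Opposite TensorProduct

noncomputable section

/-! ### The tensor product `M ⊗_R Y` of a right `R`-module `M` and a left `R`-module `Y`,
and the Tor functors `Tor_i(-, Y)`, defined as left derived functors of `- ⊗_R Y`.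

Right `R`-modules are regarded as left modules over the opposite ring `Rᵐᵒᵖ`. -/

variable (R : Type) [Ring R]

/-- The subgroup of balancing relations `(m · r) ⊗ y - m ⊗ (r · y)` in `M ⊗[ℤ] Y`. -/
def torRel (M : Type) [AddCommGroup M] [Module Rᵐᵒᵖ M]
    (Y : Type) [AddCommGroup Y] [Module R Y] : AddSubgroup (M ⊗[ℤ] Y) :=
  AddSubgroup.closure
    {z | ∃ (m : M) (r : R) (y : Y),
      z = (MulOpposite.op r • m) ⊗ₜ[ℤ] y - m ⊗ₜ[ℤ] (r • y)}

variable (Y : Type) [AddCommGroup Y] [Module R Y]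

lemma torRel_le {M M' : Type} [AddCommGroup M] [Module Rᵐᵒᵖ M]
    [AddCommGroup M'] [Module Rᵐᵒᵖ M'] (g : M →ₗ[Rᵐᵒᵖ] M') :
    torRel R M Y ≤ AddSubgroup.comap
      (TensorProduct.map (g.toAddMonoidHom.toIntLinearMap)
        (LinearMap.id (R := ℤ) (M := Y))).toAddMonoidHom (torRel R M' Y) := by
  rw [torRel, AddSubgroup.closure_le]
  rintro z ⟨m, r, y, rfl⟩
  refine AddSubgroup.mem_comap.2 ?_
  have h1 : (TensorProduct.map (g.toAddMonoidHom.toIntLinearMap)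
      (LinearMap.id (R := ℤ) (M := Y))).toAddMonoidHom
      ((MulOpposite.op r • m) ⊗ₜ[ℤ] y - m ⊗ₜ[ℤ] (r • y))
      = (MulOpposite.op r • g m) ⊗ₜ[ℤ] y - (g m) ⊗ₜ[ℤ] (r • y) := by
    simp [map_sub, TensorProduct.map_tmul]
  rw [h1]
  exact AddSubgroup.subset_closure ⟨g m, r, y, rfl⟩

/-- The tensor product `M ⊗_R Y` of a right `R`-module `M` and a left `R`-module `Y`:
the quotient of `M ⊗[ℤ] Y` by the balancing relations. -/
def modTensor (M : Type) [AddCommGroup M] [Module Rᵐᵒᵖ M] : Type :=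
  (M ⊗[ℤ] Y) ⧸ torRel R M Y

instance (M : Type) [AddCommGroup M] [Module Rᵐᵒᵖ M] : AddCommGroup (modTensor R Y M) :=
  QuotientAddGroup.Quotient.addCommGroup _

/-- Functoriality of `- ⊗_R Y` in the first variable. -/
def tmap {M M' : Type} [AddCommGroup M] [Module Rᵐᵒᵖ M]
    [AddCommGroup M'] [Module Rᵐᵒᵖ M'] (g : M →ₗ[Rᵐᵒᵖ] M') :
    modTensor R Y M →+ modTensor R Y M' :=
  QuotientAddGroup.map _ _
    ((TensorProduct.map (g.toAddMonoidHom.toIntLinearMap)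
      (LinearMap.id (R := ℤ) (M := Y))).toAddMonoidHom) (torRel_le R Y g)

lemma tmap_mk {M M' : Type} [AddCommGroup M] [Module Rᵐᵒᵖ M]
    [AddCommGroup M'] [Module Rᵐᵒᵖ M'] (g : M →ₗ[Rᵐᵒᵖ] M') (z : M ⊗[ℤ] Y) :
    tmap R Y g (QuotientAddGroup.mk z)
      = QuotientAddGroup.mk (TensorProduct.map (g.toAddMonoidHom.toIntLinearMap)
        (LinearMap.id (R := ℤ) (M := Y)) z) :=
  rfl

/-- The additive functor `M ↦ M ⊗_R Y` from right `R`-modules to abelian groups,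
for a fixed left `R`-module `Y`. -/
def torTensorFunctor : ModuleCat.{0} Rᵐᵒᵖ ⥤ AddCommGrpCat.{0} where
  obj M := AddCommGrpCat.of (modTensor R Y M)
  map {M M'} g := AddCommGrpCat.ofHom (tmap R Y g.hom)
  map_id M := by
    ext x
    refine QuotientAddGroup.induction_on x (fun z => ?_)
    show tmap R Y (𝟙 M : M ⟶ M).hom (QuotientAddGroup.mk z) = QuotientAddGroup.mk z
    rw [tmap_mk]
    congr 1
    refine TensorProduct.induction_on z rfl (fun a b => rfl) (fun a b ha hb => ?_)
    simp only [map_add, ha, hb]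
  map_comp {M M' M''} g h := by
    ext x
    refine QuotientAddGroup.induction_on x (fun z => ?_)
    show tmap R Y (g ≫ h : M ⟶ M'').hom (QuotientAddGroup.mk z)
      = tmap R Y h.hom (tmap R Y g.hom (QuotientAddGroup.mk z))
    rw [tmap_mk, tmap_mk, tmap_mk]
    congr 1
    refine TensorProduct.induction_on z rfl (fun a b => rfl) (fun a b ha hb => ?_)
    simp only [map_add, ha, hb]

instance : (torTensorFunctor R Y).Additive where
  map_add {M M'} {g g'} := by
    ext x
    refine QuotientAddGroup.induction_on x (fun z => ?_)
    show tmap R Y (g + g').hom (QuotientAddGroup.mk z)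
      = tmap R Y g.hom (QuotientAddGroup.mk z) + tmap R Y g'.hom (QuotientAddGroup.mk z)
    rw [tmap_mk, tmap_mk, tmap_mk]
    show _ = QuotientAddGroup.mk _
    congr 1
    refine TensorProduct.induction_on z (by simp) (fun a b => ?_) (fun a b ha hb => ?_)
    · simp only [TensorProduct.map_tmul]
      show _ = (g a) ⊗ₜ[ℤ] b + (g' a) ⊗ₜ[ℤ] b
      rw [← add_tmul]
      rfl
    · rw [map_add, ha, hb, map_add, map_add]
      beta_reduce
      abel

/-- `Tor_i(-, Y)` : the `i`-th left derived functor of `- ⊗_R Y` on right `R`-modules. -/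
def TorFunctor (i : ℕ) : ModuleCat.{0} Rᵐᵒᵖ ⥤ AddCommGrpCat.{0} :=
  (torTensorFunctor R Y).leftDerived i

/-- The induced map `Tor_i(f, Y) : Tor_i(M, Y) → Tor_i(N, Y)` for `f : M ⟶ N`. -/
def torMap (i : ℕ) {M N : ModuleCat.{0} Rᵐᵒᵖ} (f : M ⟶ N) :
    (TorFunctor R Y i).obj M ⟶ (TorFunctor R Y i).obj N :=
  (TorFunctor R Y i).map f

variable {R Y}

/-! ### Ext -/

/-- The induced map `Ext^i(f, X) : Ext^i_S(N, X) → Ext^i_S(M, X)` for a morphism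
`f : M ⟶ N` of `S`-modules. -/
def extMapLeft {S : Type} [Ring S] (i : ℕ) {M N : ModuleCat.{0} S} (f : M ⟶ N)
    (X : ModuleCat.{0} S) :
    ((Ext ℤ (ModuleCat.{0} S) i).obj (op N)).obj X ⟶
      ((Ext ℤ (ModuleCat.{0} S) i).obj (op M)).obj X :=
  ((Ext ℤ (ModuleCat.{0} S) i).map f.op).app X

/-- The induced map `Ext^i(X, f) : Ext^i_S(X, M) → Ext^i_S(X, N)` for a morphism
`f : M ⟶ N` of `S`-modules. -/
def extMapRight {S : Type} [Ring S] (i : ℕ) (X : ModuleCat.{0} S)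
    {M N : ModuleCat.{0} S} (f : M ⟶ N) :
    ((Ext ℤ (ModuleCat.{0} S) i).obj (op X)).obj M ⟶
      ((Ext ℤ (ModuleCat.{0} S) i).obj (op X)).obj N :=
  ((Ext ℤ (ModuleCat.{0} S) i).obj (op X)).map f

/-! ### Gorenstein projective modules -/

/-- The natural evaluation map from a module `G` to its bidual
`Hom(Hom(G, S), S)`; here `G` is a left `S`-module, its dual `Hom_S(G, S)` is a right
`S`-module (i.e. a module over `Sᵐᵒᵖ`), and the bidual is again a left `S`-module. -/
def evalBidual (S : Type) [Ring S] (G : Type) [AddCommGroup G] [Module S G] :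
    G →ₗ[S] ((G →ₗ[S] S) →ₗ[Sᵐᵒᵖ] S) where
  toFun g :=
    { toFun := fun φ => φ g
      map_add' := fun φ ψ => rfl
      map_smul' := fun s φ => rfl }
  map_add' g g' := by ext φ; simp
  map_smul' s g := by ext φ; simp

/-- A (left) `S`-module `G` is Gorenstein projective (equivalently, of G-dimension zero) if
it is reflexive (the evaluation map to its bidual is bijective), and
`Ext^i_S(G, S) = 0 = Ext^i_{Sᵐᵒᵖ}(G*, S)` for all `i > 0`, where `G* = Hom_S(G, S)`.
Right `R`-modules are handled by taking `S := Rᵐᵒᵖ`. -/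
def IsGProj (S : Type) [Ring S] (G : ModuleCat.{0} S) : Prop :=
  Function.Bijective (evalBidual S G) ∧
  (∀ i : ℕ, 0 < i →
    Subsingleton (((Ext ℤ (ModuleCat.{0} S) i).obj (op G)).obj (ModuleCat.of S S))) ∧
  (∀ i : ℕ, 0 < i →
    Subsingleton (((Ext ℤ (ModuleCat.{0} Sᵐᵒᵖ) i).obj
      (op (ModuleCat.of Sᵐᵒᵖ (G →ₗ[S] S)))).obj (ModuleCat.of Sᵐᵒᵖ S)))

/-! ### Injective dimension -/

/-- The injective dimension of an `S`-module `A` is at most `n` : there is an injective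
resolution of `A` vanishing in degrees `> n`. -/
def injDimLE (S : Type) [Ring S] (A : ModuleCat.{0} S) (n : ℕ) : Prop :=
  ∃ I : InjectiveResolution A, ∀ k : ℕ, n < k → Limits.IsZero (I.cocomplex.X k)


/-! ### Auxiliary lemmas for the factorization theorem -/

namespace GPaux

open HomologicalComplex

variable {S : Type} [Ring S]

variable {X M N : ModuleCat.{0} S} (f : M ⟶ N) (P : ProjectiveResolution X)

/-- The natural transformation between the (right-opped) linear Yoneda functors
induced by `f`. -/
def nu : ((linearYoneda ℤ (ModuleCat.{0} S)).obj N).rightOp ⟶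
    ((linearYoneda ℤ (ModuleCat.{0} S)).obj M).rightOp :=
  NatTrans.rightOp ((linearYoneda ℤ (ModuleCat.{0} S)).map f)

/-- The induced map of (opposite) Hom complexes. -/
def Phi : ((((linearYoneda ℤ (ModuleCat.{0} S)).obj N).rightOp.mapHomologicalComplex
      (ComplexShape.down ℕ)).obj P.complex) ⟶
    ((((linearYoneda ℤ (ModuleCat.{0} S)).obj M).rightOp.mapHomologicalComplex
      (ComplexShape.down ℕ)).obj P.complex) :=
  (NatTrans.mapHomologicalComplex (nu f) (ComplexShape.down ℕ)).app P.complex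

/-- The induced map of Hom complexes. -/
def psi : P.complex.linearYonedaObj ℤ M ⟶ P.complex.linearYonedaObj ℤ N :=
  (HomologicalComplex.unopFunctor _ _).map (Phi f P).op

/-- The short complex `Hom(P₀, Y) ⟶ Hom(P₁, Y) ⟶ Hom(P₂, Y)`. -/
def SC (Y : ModuleCat.{0} S) (P : ProjectiveResolution X) : ShortComplex (ModuleCat ℤ) :=
  (shortComplexFunctor' (ModuleCat ℤ) (ComplexShape.up ℕ) 0 1 2).obj
    (P.complex.linearYonedaObj ℤ Y)

/-- The induced map of short complexes. -/
def phi' : SC M P ⟶ SC N P :=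
  (shortComplexFunctor' (ModuleCat ℤ) (ComplexShape.up ℕ) 0 1 2).map (psi f P)

lemma step2 (hext : extMapRight 1 X f = 0) :
    HomologicalComplex.homologyMap (Phi f P) 1 = 0 := by
  have step1 : ((NatTrans.leftDerived (nu f) 1).app X).unop = 0 := hext
  have h0 : (NatTrans.leftDerived (nu f) 1).app X = 0 := by
    apply Quiver.Hom.unop_inj; simpa using step1
  rw [ProjectiveResolution.leftDerived_app_eq (nu f) P 1] at h0
  rw [← CategoryTheory.Iso.eq_inv_comp] at h0
  have h0' : (HomologicalComplex.homologyFunctor (ModuleCat ℤ)ᵒᵖ (ComplexShape.down ℕ) 1).map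
      (Phi f P) ≫ (P.isoLeftDerivedObj ((linearYoneda ℤ (ModuleCat.{0} S)).obj M).rightOp 1).inv
      = (P.isoLeftDerivedObj ((linearYoneda ℤ (ModuleCat.{0} S)).obj N).rightOp 1).inv ≫ 0 := h0
  rw [Limits.comp_zero] at h0'
  have : (HomologicalComplex.homologyFunctor _ _ 1).map (Phi f P) = 0 := by
    rw [← cancel_mono
      (P.isoLeftDerivedObj ((linearYoneda ℤ (ModuleCat.{0} S)).obj M).rightOp 1).inv, h0',
      Limits.zero_comp]
  exact this

lemma step3 (hext : extMapRight 1 X f = 0) :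
    HomologicalComplex.homologyMap (psi f P) 1 = 0 := by
  have hΦ : (HomologicalComplex.opFunctor _ _).map (psi f P).op = Phi f P := rfl
  have hnat := HomologicalComplex.homologyOp_hom_naturality (psi f P) 1
  have h1 : HomologicalComplex.homologyMap ((HomologicalComplex.opFunctor _ _).map (psi f P).op) 1 = 0 := step2 f P hext
  simp only [h1] at hnat
  have h2 : (HomologicalComplex.homologyMap (psi f P) 1).op = 0 := by
    rw [← cancel_epi ((P.complex.linearYonedaObj ℤ N).homologyOp 1).hom, ← hnat,
      Limits.comp_zero]
    exact Limits.zero_comp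
  exact Quiver.Hom.op_inj h2

lemma step4 (hext : extMapRight 1 X f = 0) :
    ShortComplex.homologyMap (phi' f P) = 0 := by
  have h0 : (ComplexShape.up ℕ).prev 1 = 0 := ComplexShape.prev_eq' _ (by simp)
  have h2 : (ComplexShape.up ℕ).next 1 = 2 := ComplexShape.next_eq' _ (by simp)
  set e := natIsoSc' (ModuleCat ℤ) (ComplexShape.up ℕ) 0 1 2 h0 h2 with he
  have hnat := e.hom.naturality (psi f P)
  have heq : phi' f P = (e.app _).inv ≫
      (shortComplexFunctor (ModuleCat ℤ) _ 1).map (psi f P) ≫ (e.app _).hom := by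
    exact (CategoryTheory.Iso.eq_inv_comp _).2 hnat.symm
  show ShortComplex.homologyMap
    (S₁ := (shortComplexFunctor' (ModuleCat ℤ) (ComplexShape.up ℕ) 0 1 2).obj (P.complex.linearYonedaObj ℤ M))
    (S₂ := (shortComplexFunctor' (ModuleCat ℤ) (ComplexShape.up ℕ) 0 1 2).obj (P.complex.linearYonedaObj ℤ N))
    (phi' f P) = 0
  rw [heq, ShortComplex.homologyMap_comp, ShortComplex.homologyMap_comp]
  have h' : ShortComplex.homologyMap
      ((shortComplexFunctor (ModuleCat ℤ) (ComplexShape.up ℕ) 1).map (psi f P)) = 0 :=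
    step3 f P hext
  rw [h']
  simp

set_option maxHeartbeats 2000000 in
/-- If `Ext¹(X, f) = 0` then, computing with a projective resolution `P` of `X`,
every `1`-cocycle `g : P₁ ⟶ M` becomes a coboundary after composing with `f`. -/
lemma key (hext : extMapRight 1 X f = 0)
    (g : P.complex.X 1 ⟶ M) (hg : P.complex.d 2 1 ≫ g = 0) :
    ∃ h0 : P.complex.X 0 ⟶ N, P.complex.d 1 0 ≫ h0 = g ≫ f := by
  have hgmem : (SC M P).g g = 0 := by
    show (P.complex.linearYonedaObj ℤ M).d 1 2 g = 0
    exact hg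
  let c : ((SC M P).cycles : Type) := (SC M P).moduleCatCyclesIso.inv ⟨g, hgmem⟩
  have h5 : (SC N P).homologyπ (ShortComplex.cyclesMap (phi' f P) c) = 0 := by
    have hn : ShortComplex.homologyMap (phi' f P) ((SC M P).homologyπ c)
        = (SC N P).homologyπ (ShortComplex.cyclesMap (phi' f P) c) :=
      congrArg (fun (t : (SC M P).cycles ⟶ (SC N P).homology) => t c)
        (ShortComplex.homologyπ_naturality (phi' f P))
    rw [step4 f P hext] at hn
    exact hn.symm.trans (by rfl)
  let y : LinearMap.ker (SC N P).g.hom :=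
    (SC N P).moduleCatCyclesIso.hom (ShortComplex.cyclesMap (phi' f P) c)
  have h6 : (y.1 : (SC N P).X₂) = (psi f P).f 1 g := by
    have e1 : (LinearMap.ker (SC N P).g.hom).subtype y
        = (SC N P).iCycles (ShortComplex.cyclesMap (phi' f P) c) :=
      congrArg (fun (t : (SC N P).cycles ⟶ (SC N P).X₂) =>
        t (ShortComplex.cyclesMap (phi' f P) c)) ((SC N P).moduleCatCyclesIso_hom_i)
    have e2 : (SC N P).iCycles (ShortComplex.cyclesMap (phi' f P) c)
        = (phi' f P).τ₂ ((SC M P).iCycles c) :=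
      congrArg (fun (t : (SC M P).cycles ⟶ (SC N P).X₂) => t c)
        (ShortComplex.cyclesMap_i (phi' f P))
    have e3 : (SC M P).iCycles c = (LinearMap.ker (SC M P).g.hom).subtype ⟨g, hgmem⟩ :=
      congrArg (fun (t : (SC M P).moduleCatLeftHomologyData.K ⟶ (SC M P).X₂) =>
        t ⟨g, hgmem⟩) ((SC M P).moduleCatCyclesIso_inv_iCycles)
    have e4 : (phi' f P).τ₂ ((SC M P).iCycles c) = (psi f P).f 1 g := by
      rw [e3]; rfl
    exact e1.trans (e2.trans e4)
  have h7 : (SC N P).moduleCatLeftHomologyData.π y = 0 := by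
    have e5 : (SC N P).moduleCatHomologyIso.hom
          ((SC N P).homologyπ (ShortComplex.cyclesMap (phi' f P) c))
        = (SC N P).moduleCatLeftHomologyData.π y :=
      congrArg (fun (t : (SC N P).cycles ⟶ (SC N P).moduleCatLeftHomologyData.H) =>
        t (ShortComplex.cyclesMap (phi' f P) c)) ((SC N P).π_moduleCatCyclesIso_hom)
    rw [h5, map_zero] at e5
    exact e5.symm
  have h8 : y ∈ LinearMap.range (SC N P).moduleCatToCycles := by
    rwa [← Submodule.Quotient.mk_eq_zero]
  obtain ⟨b, hb⟩ := h8
  refine ⟨b, ?_⟩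
  have hb2 : (SC N P).f b = (y.1 : (SC N P).X₂) := by rw [← hb]; rfl
  have hSNf : (SC N P).f b = P.complex.d 1 0 ≫ b := by
    show (P.complex.linearYonedaObj ℤ N).d 0 1 b = _
    rfl
  have hψ1 : ((psi f P).f 1 : _ → _) g = g ≫ f := rfl
  rw [hSNf] at hb2
  rw [hb2, h6, hψ1]

end GPaux

/-- Over a left and right noetherian ring, if `Ext^1(X, f) = 0` for all
finitely generated Gorenstein projective `X`, then `f` factors through (the projective
module of) any cosyzygy sequence `0 → M → Q → Ω⁻¹M → 0` of `M`. -/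
theorem factors_through_projective_of_ext1_covariant_vanishes_gp
    (R : Type) [Ring R] [IsNoetherianRing R] [IsNoetherianRing Rᵐᵒᵖ]
    (M N : ModuleCat.{0} Rᵐᵒᵖ) [Module.Finite Rᵐᵒᵖ M] [Module.Finite Rᵐᵒᵖ N] (hM : IsGProj Rᵐᵒᵖ M) (hN : IsGProj Rᵐᵒᵖ N) (f : M ⟶ N)
    (hyp : (∀ X : ModuleCat.{0} Rᵐᵒᵖ, Module.Finite Rᵐᵒᵖ X → IsGProj Rᵐᵒᵖ X → extMapRight 1 X f = 0))
    (Q ΩM : ModuleCat.{0} Rᵐᵒᵖ) (u : M ⟶ Q) (p : Q ⟶ ΩM)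
    (hQfin : Module.Finite Rᵐᵒᵖ Q) (hQ : Module.Projective Rᵐᵒᵖ Q)
    (hΩfin : Module.Finite Rᵐᵒᵖ ΩM) (hΩ : IsGProj Rᵐᵒᵖ ΩM)
    (hu : Function.Injective u) (hp : Function.Surjective p)
    (hexact : Function.Exact u p) :
    ∃ h : Q ⟶ N, f = u ≫ h := by
  classical
  have hext : extMapRight 1 ΩM f = 0 := hyp ΩM hΩfin hΩ
  set Pres : ProjectiveResolution ΩM := ProjectiveResolution.of ΩM with hPres
  have key : ∀ g : Pres.complex.X 1 ⟶ M, Pres.complex.d 2 1 ≫ g = 0 →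
      ∃ h0 : Pres.complex.X 0 ⟶ N, Pres.complex.d 1 0 ≫ h0 = g ≫ f :=
    fun g hg => GPaux.key f Pres hext g hg
  set T := Rᵐᵒᵖ
  have hpEpi : Epi p := (ModuleCat.epi_iff_surjective p).2 hp
  set π0 := Pres.π.f 0 with hπ0def
  have hπ0 : Function.Surjective π0 :=
    (ModuleCat.epi_iff_surjective π0).1 inferInstance
  set d10 := Pres.complex.d 1 0 with hd10
  set d21 := Pres.complex.d 2 1 with hd21
  have hex0 : ∀ y : Pres.complex.X 0, π0 y = 0 → ∃ z, d10 z = y := by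
    intro y hy
    exact (ShortComplex.moduleCat_exact_iff _).1 Pres.exact₀ y hy
  set q0 : Pres.complex.X 0 ⟶ Q := @Projective.factorThru _ _ _ _ _ _ π0 p hpEpi with hq0def
  have hq0 : ∀ x, p (q0 x) = π0 x := by
    intro x
    exact congrArg (fun (t : Pres.complex.X 0 ⟶ ΩM) => t x) (@Projective.factorThru_comp _ _ _ _ _ _ π0 p hpEpi)
  have hmem : ∀ x : Pres.complex.X 1, q0 (d10 x) ∈ LinearMap.range u.hom := by
    intro x
    have h1 : p (q0 (d10 x)) = 0 := by
      rw [hq0]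
      exact congrArg (fun (t : Pres.complex.X 1 ⟶ ΩM) => t x) Pres.complex_d_comp_π_f_zero
    rw [LinearMap.mem_range]
    obtain ⟨m, hm⟩ := (hexact _).1 h1
    exact ⟨m, hm⟩
  set eu := LinearEquiv.ofInjective u.hom hu with heu
  set q1 : Pres.complex.X 1 ⟶ M :=
    ModuleCat.ofHom (eu.symm.toLinearMap ∘ₗ LinearMap.codRestrict (LinearMap.range u.hom)
      (q0.hom ∘ₗ d10.hom) hmem) with hq1def
  have hq1 : ∀ x, u (q1 x) = q0 (d10 x) := by
    intro x
    have h3 : ((eu (q1 x) : LinearMap.range u.hom) : Q) = u (q1 x) := rfl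
    have h4 : eu (q1 x) = ⟨q0 (d10 x), hmem x⟩ := eu.apply_symm_apply _
    rw [← h3, h4]
  have hcocycle : d21 ≫ q1 = 0 := by
    ext x
    apply hu
    show u (q1 (d21 x)) = u 0
    rw [hq1, map_zero]
    have : d10 (d21 x) = 0 :=
      congrArg (fun (t : Pres.complex.X 2 ⟶ Pres.complex.X 0) => t x)
        (Pres.complex.d_comp_d 2 1 0)
    rw [this, map_zero]
  obtain ⟨h0, hh0⟩ := key q1 hcocycle
  set T2 : (Pres.complex.X 0 × M) →ₗ[T] Q := LinearMap.coprod q0.hom u.hom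
    with hT2
  have hT2surj : Function.Surjective T2 := by
    intro x
    obtain ⟨y, hy⟩ := hπ0 (p x)
    have h1 : p (x - q0 y) = 0 := by
      rw [map_sub, hq0, hy, sub_self]
    obtain ⟨m, hm⟩ := (hexact _).1 h1
    exact ⟨(y, m), by simp [hT2, LinearMap.coprod_apply, hm]⟩
  set G : (Pres.complex.X 0 × M) →ₗ[T] N := LinearMap.coprod h0.hom f.hom
    with hG
  have hker : LinearMap.ker T2 ≤ LinearMap.ker G := by
    rintro ⟨y, m⟩ hy
    have hym : q0 y + u m = 0 := hy
    have hπ0y : π0 y = 0 := by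
      have := congrArg p hym
      rw [map_add, map_zero, hq0, hexact.apply_apply_eq_zero m] at this
      exact (add_zero _).symm.trans this
    obtain ⟨z, hz⟩ := hex0 y hπ0y
    have h4 : u (q1 z) + u m = 0 := by rw [hq1, hz]; exact hym
    have hm : m = - q1 z := by
      apply hu
      rw [map_neg]
      exact eq_neg_of_add_eq_zero_right h4
    show G (y, m) = 0
    rw [hG]
    simp only [LinearMap.coprod_apply]
    rw [hm, ← hz, map_neg]
    have e1 : h0.hom (d10 z) = f (q1 z) :=
      congrArg (fun (t : Pres.complex.X 1 ⟶ N) => t z) hh0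
    rw [e1]
    simp
  set e := LinearMap.quotKerEquivOfSurjective T2 hT2surj with he
  set h : Q ⟶ N := ModuleCat.ofHom ((LinearMap.ker T2).liftQ G hker ∘ₗ e.symm.toLinearMap) with hh
  have hfact : ∀ v : Pres.complex.X 0 × M, h (T2 v) = G v := by
    intro v
    have h1 : e (Submodule.Quotient.mk v) = T2 v := by
      simp [he, LinearMap.quotKerEquivOfSurjective]
    have h2 : e.symm (T2 v) = Submodule.Quotient.mk v := by
      rw [← h1, e.symm_apply_apply]
    show (LinearMap.ker T2).liftQ G hker (e.symm (T2 v)) = G v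
    rw [h2, Submodule.liftQ_apply]
  refine ⟨h, ?_⟩
  ext m
  have h5 : T2 (0, m) = u m := by simp [hT2]
  have h6 : G (0, m) = f m := by simp [hG]
  show f m = h (u m)
  rw [← h5, hfact, h6]


end
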